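/- Let A be a complex unital Banach algebra and let a, s, c ∈ A. Suppose that for every natural number j ≥ 0, ⁅(ad a)^[j] c, s⁆ = 0. Then for every t ∈ ℝ, exp(−t • (a + s)) * c * exp(t • (a + s)) = exp(−t • a) * c * exp(t • a). -/

import Mathlib

open NormedSpace

section aux
attribute [local instance 100] LieRing.ofAssociativeRing
set_option linter.unusedSectionVars false
variable {A : Type*} [NormedRing A] [NormedAlgebra ℂ A] [CompleteSpace A]

noncomputable def myL (x : A) : A →L[ℂ] A := ContinuousLinearMap.mul ℂ A x
noncomputable def myR (x : A) : A →L[ℂ] A := (ContinuousLinearMap.mul ℂ A).flip x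
noncomputable def myD (x : A) : A →L[ℂ] A := myL x - myR x

@[simp] lemma myL_apply (x y : A) : myL x y = x * y := rfl
@[simp] lemma myR_apply (x y : A) : myR x y = y * x := rfl
@[simp] lemma myD_apply (x y : A) : myD x y = ⁅x, y⁆ := rfl

lemma myL_pow (x c : A) (n : ℕ) : ((myL x) ^ n) c = x ^ n * c := by
  induction n with
  | zero => simp
  | succ n ih =>
    rw [pow_succ', ContinuousLinearMap.mul_apply, ih, pow_succ', mul_assoc, myL_apply]

lemma myR_pow (x c : A) (n : ℕ) : ((myR x) ^ n) c = c * x ^ n := by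
  induction n with
  | zero => simp
  | succ n ih =>
    rw [pow_succ', ContinuousLinearMap.mul_apply, ih, pow_succ, ← mul_assoc, myR_apply]

lemma exp_apply_eq_tsum (T : A →L[ℂ] A) (c : A) :
    exp T c = ∑' (n : ℕ), ((n.factorial : ℂ))⁻¹ • ((T ^ n) c) := by
  have hs := (expSeries_summable' (𝕂 := ℂ) T)
  rw [exp_eq_tsum (𝕂 := ℂ)]
  have h2 := ((ContinuousLinearMap.apply ℂ A c).map_tsum hs)
  simpa using h2

lemma exp_mul_left (x c : A) : exp (myL x) c = exp x * c := by
  rw [exp_apply_eq_tsum]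
  have hs := (expSeries_summable' (𝕂 := ℂ) x)
  rw [exp_eq_tsum (𝕂 := ℂ)]
  have h2 := ((myR c).map_tsum hs)
  simp only [myR_apply] at h2
  rw [h2]
  congr 1; funext n; rw [myL_pow, smul_mul_assoc]

lemma exp_mul_right (x c : A) : exp (myR x) c = c * exp x := by
  rw [exp_apply_eq_tsum]
  have hs := (expSeries_summable' (𝕂 := ℂ) x)
  rw [exp_eq_tsum (𝕂 := ℂ)]
  have h2 := ((myL c).map_tsum hs)
  simp only [myL_apply] at h2
  rw [h2]
  congr 1; funext n; rw [myR_pow, mul_smul_comm]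

lemma commute_LR (x y : A) : Commute (myL x) (myR y) := by
  ext z
  simp [ContinuousLinearMap.mul_apply, mul_assoc]

lemma exp_D (x c : A) : exp (myD x) c = exp x * c * exp (-x) := by
  have hD : myD x = myL x + myR (-x) := by
    ext y; simp [myD, sub_eq_add_neg]
  rw [hD, exp_add_of_commute_of_mem_ball (𝕂 := ℂ) (commute_LR x (-x))
      ((expSeries_radius_eq_top ℂ (A →L[ℂ] A)).symm ▸ edist_lt_top _ _)
      ((expSeries_radius_eq_top ℂ (A →L[ℂ] A)).symm ▸ edist_lt_top _ _), ContinuousLinearMap.mul_apply,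
    exp_mul_right, exp_mul_left, mul_assoc]

lemma myD_iter (x c : A) (n : ℕ) : ((myD x) ^ n) c = (fun y => ⁅x, y⁆)^[n] c := by
  induction n with
  | zero => simp
  | succ n ih =>
    rw [pow_succ', ContinuousLinearMap.mul_apply, ih, Function.iterate_succ_apply', myD_apply]

lemma iter_smul (t : ℝ) (a c : A) (n : ℕ) :
    (fun x => ⁅t • a, x⁆)^[n] c = t ^ n • (fun x => ⁅a, x⁆)^[n] c := by
  induction n with
  | zero => simp
  | succ n ih =>
    rw [Function.iterate_succ_apply', Function.iterate_succ_apply', ih]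
    simp only [Ring.lie_def, smul_sub, smul_mul_assoc, mul_smul_comm, smul_smul, pow_succ]
    rw [mul_comm t (t ^ n)]

lemma key (a s c : A) (h : ∀ j : ℕ, ⁅(fun x => ⁅a, x⁆)^[j] c, s⁆ = 0) :
    exp (-(a + s)) * c * exp (a + s) = exp (-a) * c * exp a := by
  have H : ∀ n : ℕ, (fun x => ⁅-(a + s), x⁆)^[n] c = (fun x => ⁅-a, x⁆)^[n] c := by
    intro n
    induction n with
    | zero => rfl
    | succ n ih =>
      rw [Function.iterate_succ_apply', Function.iterate_succ_apply', ih]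
      have hn : (fun x => ⁅-a, x⁆)^[n] c = (-1 : ℝ) ^ n • (fun x => ⁅a, x⁆)^[n] c := by
        simpa using iter_smul (-1 : ℝ) a c n
      have hz : ⁅s, (fun x => ⁅a, x⁆)^[n] c⁆ = 0 := by
        rw [← lie_skew, h n, neg_zero]
      have hs : ⁅s, (fun x => ⁅-a, x⁆)^[n] c⁆ = 0 := by
        rw [hn, lie_smul, hz, smul_zero]
      rw [neg_lie, neg_lie, add_lie, hs, add_zero]
  have e1 : exp (-(a + s)) * c * exp (a + s) = exp (myD (-(a + s))) c := by
    rw [exp_D, neg_neg]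
  have e2 : exp (-a) * c * exp a = exp (myD (-a)) c := by
    rw [exp_D, neg_neg]
  rw [e1, e2, exp_apply_eq_tsum, exp_apply_eq_tsum]
  congr 1; funext n
  rw [myD_iter, myD_iter, H n]

end aux

theorem heisenberg_conjugation_invariance (A : Type*) [NormedRing A] [NormedAlgebra ℂ A]
    [CompleteSpace A] (a s c : A)
    (h : ∀ j : ℕ, ⁅(fun x => ⁅a, x⁆)^[j] c, s⁆ = 0) :
    ∀ t : ℝ, exp ((-t) • (a + s)) * c * exp (t • (a + s)) =
      exp ((-t) • a) * c * exp (t • a) := by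
  intro t
  have h' : ∀ j : ℕ, ⁅(fun x => ⁅t • a, x⁆)^[j] c, t • s⁆ = 0 := by
    intro j
    letI : LieRing A := LieRing.ofAssociativeRing
    rw [iter_smul, smul_lie, lie_smul, h j, smul_zero, smul_zero]
  have hk := key (t • a) (t • s) c h'
  rw [smul_add, smul_add, neg_smul, neg_smul, ← neg_add]
  exact hk
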